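/- arXiv:2409.15676 — 3 statements merged into one kernel-verified Lean document; each statement's English description precedes it below -/
import Mathlib

section
/- Let Z₁,…,Z_n be independent real random variables such that for each k ∈ [K*+1] the variables {Z_i : τ*_{k−1} < i ≤ τ*_k} are iid with an atomless (continuous) distribution, where 0 = τ*₀ < τ*₁ < ⋯ < τ*_{K*} < τ*_{K*+1} = n are changepoints and h is a window size with 2h ≤ n. For h ≤ τ ≤ n−h define the two-sample Wilcoxon/Mann–Whitney statistic T_{τ,WMW} = Σ_{i=τ+1}^{τ+h} R_{τ,i}, where R_{τ,i} = Σ_{j=τ−h+1}^{τ+h} 1{Z_j ≤ Z_i}. Let ξ₁,…,ξ_n be iid standard normal random variables and let T_{τ,simul} be the same statistic computed from ξ₁,…,ξ_n; set t_{u,α} = inf{t : P(max_{h≤τ≤n−h} T_{τ,simul} > t) ≤ α} for α ∈ (0,1). Then for every random subset 𝒯̂ of {1,…,n−1} with measurable membership events, P(there exists τ ∈ 𝒯̂ ∩ H with T_{τ,WMW} > t_{u,α}) ≤ α, where H = {τ ∈ {h,…,n−h} : the open interval (τ−h, τ+h) contains none of τ*₁,…,τ*_{K*}}. -/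
open MeasureTheory ProbabilityTheory Filter

/-- The windowed two-sample Wilcoxon/Mann–Whitney statistic
`T_{τ,WMW} = Σ_{i=τ+1}^{τ+h} R_{τ,i}` with `R_{τ,i} = Σ_{j=τ−h+1}^{τ+h} 1{Z_j ≤ Z_i}`. -/
noncomputable def wmwStat {Ω : Type*} (h : ℕ) (Z : ℕ → Ω → ℝ) (τ : ℕ) (ω : Ω) : ℝ :=
  ∑ i ∈ Finset.Ioc τ (τ + h), ∑ j ∈ Finset.Ioc (τ - h) (τ + h),
    (if Z j ω ≤ Z i ω then (1 : ℝ) else 0)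

section TuneAuxSection

open MeasureTheory ProbabilityTheory Filter Set Topology ENNReal

namespace TuneAux

noncomputable def stdG : Measure ℝ := gaussianReal 0 1

instance : IsProbabilityMeasure stdG := by unfold stdG; infer_instance

lemma stdG_pos {s : Set ℝ} (hs : MeasurableSet s) (hvol : 0 < volume s) : 0 < stdG s := by
  rw [stdG, gaussianReal_apply 0 (one_ne_zero) s]
  rw [lintegral_pos_iff_support (measurable_gaussianPDF 0 1)]
  have hsupp : Function.support (gaussianPDF 0 1) = Set.univ := by
    ext x
    simp [Function.mem_support, (gaussianPDF_pos 0 (one_ne_zero) x).ne']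
  rw [hsupp]
  simpa [Measure.restrict_apply_univ] using hvol

lemma stdG_atomless (x : ℝ) : stdG {x} = 0 :=
  (gaussianReal_absolutelyContinuous 0 one_ne_zero) (Real.volume_singleton)

lemma cdf_stdG_pos (t : ℝ) : 0 < cdf stdG t := by
  rw [cdf_eq_real, measureReal_def]
  refine ENNReal.toReal_pos ?_ (measure_ne_top _ _)
  exact (stdG_pos measurableSet_Iic (by simp [Real.volume_Iic])).ne'

lemma cdf_stdG_lt_one (t : ℝ) : cdf stdG t < 1 := by
  rw [cdf_eq_real, measureReal_def]
  have h1 : stdG (Iic t) < 1 := by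
    by_contra hc
    push_neg at hc
    have heq : stdG (Iic t) = 1 := le_antisymm prob_le_one hc
    have hcompl := measure_compl (measurableSet_Iic (a := t)) (measure_ne_top stdG _)
    rw [compl_Iic, heq, measure_univ] at hcompl
    simp at hcompl
    exact absurd hcompl (stdG_pos measurableSet_Ioi (by simp [Real.volume_Ioi])).ne'
  calc (stdG (Iic t)).toReal < (1 : ℝ≥0∞).toReal := by
        exact ENNReal.toReal_strict_mono (by simp) h1
    _ = 1 := by simp

lemma leftLim_cdf_eq {μ : Measure ℝ} [IsProbabilityMeasure μ] (h : ∀ x, μ {x} = 0) (x : ℝ) :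
    Function.leftLim (cdf μ) x = cdf μ x := by
  have hs := (cdf μ).measure_singleton x
  rw [measure_cdf, h x] at hs
  have h1 : cdf μ x - Function.leftLim (cdf μ) x ≤ 0 := by
    by_contra hc
    push_neg at hc
    rw [eq_comm, ENNReal.ofReal_eq_zero] at hs
    linarith
  have h2 : Function.leftLim (cdf μ) x ≤ cdf μ x := (monotone_cdf μ).leftLim_le le_rfl
  linarith

lemma stdG_cdf_le (c : ℝ) (h0 : 0 ≤ c) (h1 : c ≤ 1) :
    stdG {t | cdf stdG t ≤ c} = ENNReal.ofReal c := by
  rcases eq_or_lt_of_le h0 with h0 | h0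
  · have : {t | cdf stdG t ≤ c} = ∅ := by
      ext t; simp only [mem_setOf_eq, mem_empty_iff_false, iff_false, not_le, ← h0]
      exact cdf_stdG_pos t
    rw [this, ← h0]; simp
  rcases eq_or_lt_of_le h1 with h1 | h1
  · have : {t | cdf stdG t ≤ c} = Set.univ := by
      ext t; simp only [mem_setOf_eq, mem_univ, iff_true, h1 ▸ (cdf_stdG_lt_one t).le]
    rw [this, h1]; simp
  -- 0 < c < 1
  have hne : {t | cdf stdG t ≤ c}.Nonempty := by
    have := (tendsto_cdf_atBot stdG).eventually_lt_const h0
    obtain ⟨t, ht⟩ := this.exists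
    exact ⟨t, ht.le⟩
  have hbdd : BddAbove {t | cdf stdG t ≤ c} := by
    obtain ⟨t₂, ht₂⟩ := ((tendsto_cdf_atTop stdG).eventually_const_lt h1).exists
    refine ⟨t₂, fun u hu => ?_⟩
    by_contra hc
    push_neg at hc
    exact absurd (le_trans (monotone_cdf stdG hc.le) hu) (not_le.mpr ht₂)
  set t₁ := sSup {t | cdf stdG t ≤ c} with ht₁
  have hleft : cdf stdG t₁ ≤ c := by
    have hall : ∀ t < t₁, cdf stdG t ≤ c := by
      intro t ht
      obtain ⟨u, hu, htu⟩ := exists_lt_of_lt_csSup hne ht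
      exact le_trans (monotone_cdf stdG htu.le) hu
    have hll : Function.leftLim (cdf stdG) t₁ ≤ c := by
      refine le_of_tendsto ((monotone_cdf stdG).tendsto_leftLim t₁) ?_
      exact eventually_nhdsWithin_of_forall hall
    rwa [leftLim_cdf_eq stdG_atomless] at hll
  have hright : c ≤ cdf stdG t₁ := by
    by_contra hc
    push_neg at hc
    have hrc : ContinuousWithinAt (cdf stdG) (Ici t₁) t₁ := (cdf stdG).right_continuous t₁
    have hev : ∀ᶠ t in 𝓝[>] t₁, cdf stdG t < c :=
      (hrc.tendsto.eventually_lt_const hc).filter_mono (nhdsWithin_mono _ Ioi_subset_Ici_self)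
    obtain ⟨t, ht, htmem⟩ := (hev.and self_mem_nhdsWithin).exists
    exact absurd (le_csSup hbdd ht.le) (not_le.mpr htmem)
  have hU : {t | cdf stdG t ≤ c} = Iic t₁ := by
    ext t
    constructor
    · exact fun ht => le_csSup hbdd ht
    · exact fun ht => le_trans (monotone_cdf stdG ht) hleft
  rw [hU, ← ofReal_cdf stdG t₁, le_antisymm hleft hright]

/-- monotone transport sending the standard gaussian to `μ`. -/
noncomputable def qt (μ : Measure ℝ) (t : ℝ) : ℝ := sInf {x | cdf stdG t ≤ cdf μ x}

section qt
variable (μ : Measure ℝ) [IsProbabilityMeasure μ]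

lemma qt_set_nonempty (t : ℝ) : {x | cdf stdG t ≤ cdf μ x}.Nonempty := by
  obtain ⟨x, hx⟩ := ((tendsto_cdf_atTop μ).eventually_const_lt (cdf_stdG_lt_one t)).exists
  exact ⟨x, hx.le⟩

lemma qt_set_bddBelow (t : ℝ) : BddBelow {x | cdf stdG t ≤ cdf μ x} := by
  obtain ⟨x₀, hx₀⟩ := ((tendsto_cdf_atBot μ).eventually_lt_const (cdf_stdG_pos t)).exists
  refine ⟨x₀, fun a ha => ?_⟩
  by_contra hc
  push_neg at hc
  exact absurd (le_trans ha (monotone_cdf μ hc.le)) (not_le.mpr hx₀)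

lemma cdf_qt_self (t : ℝ) : cdf stdG t ≤ cdf μ (qt μ t) := by
  have hall : ∀ y, qt μ t < y → cdf stdG t ≤ cdf μ y := by
    intro y hy
    obtain ⟨a, ha, hay⟩ := exists_lt_of_csInf_lt (qt_set_nonempty μ t) hy
    exact le_trans ha (monotone_cdf μ hay.le)
  have hrc : ContinuousWithinAt (cdf μ) (Ici (qt μ t)) (qt μ t) :=
    (cdf μ).right_continuous (qt μ t)
  refine ge_of_tendsto (hrc.tendsto.mono_left (nhdsWithin_mono _ Ioi_subset_Ici_self)) ?_
  exact eventually_nhdsWithin_of_forall fun y hy => hall y hy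

lemma qt_le_iff {t x : ℝ} : qt μ t ≤ x ↔ cdf stdG t ≤ cdf μ x := by
  constructor
  · exact fun hx => le_trans (cdf_qt_self μ t) (monotone_cdf μ hx)
  · exact fun hx => csInf_le (qt_set_bddBelow μ t) hx

lemma qt_mono : Monotone (qt μ) := by
  intro t t' htt'
  rw [qt_le_iff μ]
  exact le_trans (monotone_cdf stdG htt') (cdf_qt_self μ t')

lemma qt_measurable : Measurable (qt μ) := (qt_mono μ).measurable

lemma map_qt : Measure.map (qt μ) stdG = μ := by
  haveI : IsProbabilityMeasure (Measure.map (qt μ) stdG) :=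
    Measure.isProbabilityMeasure_map (qt_measurable μ).aemeasurable
  refine Measure.ext_of_Iic _ _ (fun x => ?_)
  rw [Measure.map_apply (qt_measurable μ) measurableSet_Iic]
  have hpre : qt μ ⁻¹' (Iic x) = {t | cdf stdG t ≤ cdf μ x} := by
    ext t
    simp only [mem_preimage, mem_Iic, mem_setOf_eq, qt_le_iff μ]
  rw [hpre, stdG_cdf_le _ (cdf_nonneg μ x) (cdf_le_one μ x), ofReal_cdf]

end qt

lemma joint_law {Ω : Type*} [MeasurableSpace Ω] (P : Measure Ω) [IsProbabilityMeasure P]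
    {n : ℕ} (f : ℕ → Ω → ℝ) (hm : ∀ i, Measurable (f i))
    (hind : iIndepFun (fun i : Fin n => f (i.val + 1)) P) :
    Measure.map (fun ω (i : Fin n) => f (i.val + 1) ω) P
      = Measure.pi (fun i : Fin n => Measure.map (f (i.val + 1)) P) := by
  haveI : ∀ i : Fin n, IsProbabilityMeasure (Measure.map (f (i.val + 1)) P) :=
    fun i => Measure.isProbabilityMeasure_map (hm _).aemeasurable
  refine (Measure.pi_eq fun s hs => ?_).symm
  rw [Measure.map_apply (measurable_pi_lambda _ fun i => hm _) (MeasurableSet.univ_pi hs)]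
  have hpre : (fun ω (i : Fin n) => f (i.val + 1) ω) ⁻¹' (Set.pi univ s)
      = ⋂ i ∈ Finset.univ, (fun ω => f ((i : Fin n).val + 1) ω) ⁻¹' (s i) := by
    ext ω; simp [Set.mem_pi]
  rw [hpre, hind.measure_inter_preimage_eq_mul Finset.univ (fun i _ => hs i)]
  exact Finset.prod_congr rfl fun i _ => (Measure.map_apply (hm _) (hs i)).symm

lemma pi_map_coord {n : ℕ} (ν : Measure ℝ) [IsProbabilityMeasure ν]
    (μs : Fin n → Measure ℝ) [∀ i, IsProbabilityMeasure (μs i)]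
    (g : Fin n → ℝ → ℝ) (hg : ∀ i, Measurable (g i))
    (hmap : ∀ i, Measure.map (g i) ν = μs i) :
    Measure.map (fun (x : Fin n → ℝ) (i : Fin n) => g i (x i))
      (Measure.pi fun _ => ν) = Measure.pi μs := by
  refine (Measure.pi_eq fun s hs => ?_).symm
  have hGm : Measurable (fun (x : Fin n → ℝ) (i : Fin n) => g i (x i)) :=
    measurable_pi_lambda _ fun i => (hg i).comp (measurable_pi_apply i)
  rw [Measure.map_apply hGm (MeasurableSet.univ_pi hs)]
  have hpre : (fun (x : Fin n → ℝ) (i : Fin n) => g i (x i)) ⁻¹' (Set.pi univ s)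
      = Set.pi univ (fun i => g i ⁻¹' s i) := by
    ext x; simp [Set.mem_pi]
  rw [hpre, Measure.pi_pi]
  refine Finset.prod_congr rfl fun i _ => ?_
  rw [← hmap i, Measure.map_apply (hg i) (hs i)]

lemma map_eval_pair {n : ℕ} (μs : Fin n → Measure ℝ) [∀ i, IsProbabilityMeasure (μs i)]
    {i j : Fin n} (hij : i ≠ j) :
    Measure.map (fun x : Fin n → ℝ => (x i, x j)) (Measure.pi μs)
      = (μs i).prod (μs j) := by
  refine (Measure.prod_eq fun s t hs ht => ?_).symm
  rw [Measure.map_apply ((measurable_pi_apply i).prodMk (measurable_pi_apply j))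
    (hs.prod ht)]
  have hpre : (fun x : Fin n → ℝ => (x i, x j)) ⁻¹' (s ×ˢ t)
      = Set.pi univ (fun k => if k = i then s else if k = j then t else univ) := by
    ext x
    simp only [mem_preimage, mem_prod, Set.mem_pi, mem_univ, true_implies]
    constructor
    · rintro ⟨hxi, hxj⟩ k
      by_cases hk : k = i
      · subst hk; simp [hxi]
      · by_cases hk' : k = j
        · subst hk'; simp [hk, hxj]
        · simp [hk, hk']
    · intro hk
      have h1 := hk i
      have h2 := hk j
      rw [if_pos rfl] at h1
      rw [if_neg (fun hc => hij hc.symm), if_pos rfl] at h2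
      exact ⟨h1, h2⟩
  rw [hpre, Measure.pi_pi]
  rw [← Finset.mul_prod_erase Finset.univ _ (Finset.mem_univ i),
    ← Finset.mul_prod_erase _ _ (Finset.mem_erase.mpr ⟨fun hc => hij hc.symm, Finset.mem_univ j⟩)]
  have hrest : ∀ k ∈ (Finset.univ.erase i).erase j,
      μs k (if k = i then s else if k = j then t else univ) = 1 := by
    intro k hk
    have hkj : k ≠ j := (Finset.mem_erase.mp hk).1
    have hki : k ≠ i := (Finset.mem_erase.mp (Finset.mem_erase.mp hk).2).1
    rw [if_neg hki, if_neg hkj, measure_univ]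
  rw [Finset.prod_congr rfl hrest, Finset.prod_const_one, mul_one, if_pos rfl,
    if_neg (show j = i → False from fun hc => hij hc.symm), if_pos rfl]

lemma prod_diag_null {μ ν : Measure ℝ} [IsProbabilityMeasure μ] [IsProbabilityMeasure ν]
    (hν : ∀ x, ν {x} = 0) : (μ.prod ν) {p : ℝ × ℝ | p.1 = p.2} = 0 := by
  rw [Measure.prod_apply (measurableSet_eq_fun measurable_fst measurable_snd)]
  have : ∀ a : ℝ, ν (Prod.mk a ⁻¹' {p : ℝ × ℝ | p.1 = p.2}) = 0 := by
    intro a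
    have : Prod.mk a ⁻¹' {p : ℝ × ℝ | p.1 = p.2} = {a} := by
      ext b; simp [eq_comm]
    rw [this, hν]
  rw [lintegral_congr this, lintegral_zero]

lemma pi_pair_fun_null {n : ℕ} (ν : Measure ℝ) [IsProbabilityMeasure ν]
    (μs : Fin n → Measure ℝ) [∀ i, IsProbabilityMeasure (μs i)]
    (g : Fin n → ℝ → ℝ) (hg : ∀ i, Measurable (g i))
    (hmap : ∀ i, Measure.map (g i) ν = μs i)
    (hatomless : ∀ i x, μs i {x} = 0)
    {i j : Fin n} (hij : i ≠ j) :
    (Measure.pi fun _ : Fin n => ν) {x | g i (x i) = g j (x j)} = 0 := by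
  have hdiag : MeasurableSet {p : ℝ × ℝ | p.1 = p.2} :=
    measurableSet_eq_fun measurable_fst measurable_snd
  have hset : {x : Fin n → ℝ | g i (x i) = g j (x j)}
      = (fun x : Fin n → ℝ => (x i, x j)) ⁻¹' (Prod.map (g i) (g j) ⁻¹' {p : ℝ × ℝ | p.1 = p.2}) := by
    ext x; simp [Prod.map]
  rw [hset, ← Measure.map_apply ((measurable_pi_apply i).prodMk (measurable_pi_apply j))
    (hdiag.preimage ((hg i).prodMap (hg j))),
    map_eval_pair (fun _ => ν) hij,
    ← Measure.map_apply ((hg i).prodMap (hg j)) hdiag,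
    ← Measure.map_prod_map _ _ (hg i) (hg j), hmap i, hmap j]
  exact prod_diag_null (hatomless j)

noncomputable def segOf (τstar : ℕ → ℕ) (i : ℕ) : ℕ := sInf {k | i ≤ τstar k}

lemma segOf_spec (τstar : ℕ → ℕ) (Kstar n : ℕ) (hτ0 : τstar 0 = 0)
    (hτlast : τstar (Kstar + 1) = n) {i : ℕ} (h1 : 1 ≤ i) (h2 : i ≤ n) :
    1 ≤ segOf τstar i ∧ segOf τstar i ≤ Kstar + 1 ∧
      τstar (segOf τstar i - 1) < i ∧ i ≤ τstar (segOf τstar i) := by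
  have hne : (Kstar + 1) ∈ {k | i ≤ τstar k} := by simp [hτlast, h2]
  have hmem : segOf τstar i ∈ {k | i ≤ τstar k} := Nat.sInf_mem ⟨_, hne⟩
  have hle : segOf τstar i ≤ Kstar + 1 := Nat.sInf_le hne
  have h1' : 1 ≤ segOf τstar i := by
    rcases Nat.eq_zero_or_pos (segOf τstar i) with h0 | h0
    · rw [h0] at hmem; simp only [Set.mem_setOf_eq, hτ0] at hmem; omega
    · exact h0
  refine ⟨h1', hle, ?_, hmem⟩
  have hnm : segOf τstar i - 1 ∉ {k | i ≤ τstar k} :=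
    Nat.notMem_of_lt_sInf (show segOf τstar i - 1 < segOf τstar i by omega)
  simpa only [Set.mem_setOf_eq, not_le] using hnm

lemma segOf_gt (τstar : ℕ → ℕ) {i m : ℕ} (hm : m < segOf τstar i) : τstar m < i := by
  have := Nat.notMem_of_lt_sInf hm
  simpa only [Set.mem_setOf_eq, not_le] using this

end TuneAux

end TuneAuxSection

open TuneAux in
/-- **Exact FWER control for the rank-based TUNE method (Theorem 4).**
For independent observations that are iid with an atomless distribution within each
segment of a multiple changepoint model, thresholding the windowed Wilcoxon statistics
at the universal threshold `t_{u,α}` — computed from the same statistics evaluated on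
iid standard normal variables — controls the FWER at level `α`, for every detection
output `𝒯` (a random subset of `{1,…,n−1}` with measurable membership events). -/
theorem stmt4
    {Ω : Type*} [MeasurableSpace Ω] (P : Measure Ω) [IsProbabilityMeasure P]
    (n h : ℕ) (hh : 1 ≤ h) (hn : 2 * h ≤ n)
    (Kstar : ℕ) (τstar : ℕ → ℕ)
    (hτ0 : τstar 0 = 0) (hτlast : τstar (Kstar + 1) = n)
    (hτmono : ∀ k ≤ Kstar, τstar k < τstar (k + 1))
    (Z : ℕ → Ω → ℝ) (hZmeas : ∀ i, Measurable (Z i))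
    (hZindep : iIndepFun (fun i : Fin n => Z (i.val + 1)) P)
    (μseg : ℕ → Measure ℝ)
    (hseglaw : ∀ k : ℕ, 1 ≤ k → k ≤ Kstar + 1 →
      ∀ i ∈ Finset.Ioc (τstar (k - 1)) (τstar k), Measure.map (Z i) P = μseg k)
    (hatomless : ∀ k : ℕ, 1 ≤ k → k ≤ Kstar + 1 → ∀ x : ℝ, μseg k {x} = 0)
    (ξ : ℕ → Ω → ℝ) (hξmeas : ∀ i, Measurable (ξ i))
    (hξindep : iIndepFun (fun i : Fin n => ξ (i.val + 1)) P)
    (hξlaw : ∀ i ∈ Finset.Icc 1 n, Measure.map (ξ i) P = gaussianReal 0 1)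
    (α : ℝ) (hα0 : 0 < α) (hα1 : α < 1)
    (𝒯 : Ω → Set ℕ)
    (h𝒯sub : ∀ ω, 𝒯 ω ⊆ Set.Icc 1 (n - 1))
    (h𝒯meas : ∀ τ : ℕ, MeasurableSet {ω | τ ∈ 𝒯 ω})
    -- the universal threshold, simulated from the iid standard normal sample
    (tU : ℝ)
    (htU : tU = sInf {t : ℝ |
      P {ω | ∃ τ ∈ Finset.Icc h (n - h), wmwStat h ξ τ ω > t} ≤ ENNReal.ofReal α}) :
    P {ω | ∃ τ ∈ Finset.Icc h (n - h),
        (∀ k : ℕ, 1 ≤ k → k ≤ Kstar → ¬(τ - h < τstar k ∧ τstar k < τ + h)) ∧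
        τ ∈ 𝒯 ω ∧ wmwStat h Z τ ω > tU}
      ≤ ENNReal.ofReal α := by
  classical
  have hn0 : 0 < n := by omega
  -- Finite-index embedding of {1, …, n} into `Fin n`
  set e : ℕ → Fin n := fun j => if hj : j - 1 < n then (⟨j - 1, hj⟩ : Fin n) else ⟨0, hn0⟩
    with he
  have heval : ∀ j, 1 ≤ j → j ≤ n → ((e j : Fin n) : ℕ) + 1 = j := by
    intro j h1 h2
    have hj : j - 1 < n := by omega
    simp only [he, dif_pos hj]
    omega
  -- The statistic as a function on `Fin n → ℝ`
  set Wfin : ℕ → (Fin n → ℝ) → ℝ := fun τ x =>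
    ∑ i ∈ Finset.Ioc τ (τ + h), ∑ j ∈ Finset.Ioc (τ - h) (τ + h),
      (if x (e j) ≤ x (e i) then (1 : ℝ) else 0) with hWfin
  have hWmeasSet : ∀ (τ : ℕ) (t : ℝ), MeasurableSet {x : Fin n → ℝ | Wfin τ x > t} := by
    intro τ t
    refine measurableSet_lt measurable_const ?_
    rw [hWfin]
    exact Finset.measurable_sum _ fun i _ => Finset.measurable_sum _ fun j _ =>
      Measurable.ite (measurableSet_le (measurable_pi_apply _) (measurable_pi_apply _))
        measurable_const measurable_const
  -- translation between the two forms of the statistic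
  have htrans : ∀ (f : ℕ → Ω → ℝ) (τ : ℕ), τ ∈ Finset.Icc h (n - h) → ∀ ω,
      wmwStat h f τ ω = Wfin τ (fun i : Fin n => f (i.val + 1) ω) := by
    intro f τ hτ ω
    rw [Finset.mem_Icc] at hτ
    rw [hWfin]
    unfold wmwStat
    refine Finset.sum_congr rfl fun i hi => Finset.sum_congr rfl fun j hj => ?_
    rw [Finset.mem_Ioc] at hi hj
    have hi' := heval i (by omega) (by omega)
    have hj' := heval j (by omega) (by omega)
    simp only [hi', hj']
  -- the set of null change-point candidates
  set F : Finset ℕ := Finset.filter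
    (fun τ => ∀ k : ℕ, 1 ≤ k → k ≤ Kstar → ¬(τ - h < τstar k ∧ τstar k < τ + h))
    (Finset.Icc h (n - h)) with hF
  -- segment structure
  have hseg_spec : ∀ i : ℕ, 1 ≤ i → i ≤ n →
      1 ≤ segOf τstar i ∧ segOf τstar i ≤ Kstar + 1 ∧
        τstar (segOf τstar i - 1) < i ∧ i ≤ τstar (segOf τstar i) :=
    fun i h1 h2 => segOf_spec τstar Kstar n hτ0 hτlast h1 h2
  have hsame : ∀ τ ∈ F, ∀ a b : ℕ, a ∈ Finset.Ioc (τ - h) (τ + h) →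
      b ∈ Finset.Ioc (τ - h) (τ + h) → segOf τstar a = segOf τstar b := by
    intro τ hτF
    rw [hF, Finset.mem_filter, Finset.mem_Icc] at hτF
    obtain ⟨⟨hτ1, hτ2⟩, hτnull⟩ := hτF
    have key : ∀ a b : ℕ, a ∈ Finset.Ioc (τ - h) (τ + h) → b ∈ Finset.Ioc (τ - h) (τ + h) →
        ¬ segOf τstar a < segOf τstar b := by
      intro a b ha hb hlt
      rw [Finset.mem_Ioc] at ha hb
      obtain ⟨ha1, ha2, ha3, ha4⟩ := hseg_spec a (by omega) (by omega)
      obtain ⟨hb1, hb2, hb3, hb4⟩ := hseg_spec b (by omega) (by omega)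
      have hbgt : τstar (segOf τstar a) < b := segOf_gt τstar hlt
      exact hτnull (segOf τstar a) ha1 (by omega) ⟨by omega, by omega⟩
    intro a b ha hb
    exact le_antisymm (not_lt.mp (key b a hb ha)) (not_lt.mp (key a b ha hb))
  -- the marginal laws
  set μs : Fin n → Measure ℝ := fun i => μseg (segOf τstar (i.val + 1)) with hμs
  have hlawZ : ∀ i : Fin n, Measure.map (Z (i.val + 1)) P = μs i := by
    intro i
    have hi := i.isLt
    obtain ⟨h1, h2, h3, h4⟩ := hseg_spec (i.val + 1) (by omega) (by omega)
    rw [hμs]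
    exact hseglaw _ h1 h2 _ (Finset.mem_Ioc.mpr ⟨h3, h4⟩)
  haveI hPμs : ∀ i, IsProbabilityMeasure (μs i) := by
    intro i
    rw [← hlawZ i]
    exact Measure.isProbabilityMeasure_map (hZmeas _).aemeasurable
  have hμsatomless : ∀ (i : Fin n) (x : ℝ), μs i {x} = 0 := by
    intro i x
    have hi := i.isLt
    obtain ⟨h1, h2, -, -⟩ := hseg_spec (i.val + 1) (by omega) (by omega)
    rw [hμs]
    exact hatomless _ h1 h2 x
  -- the transport maps
  set gg : Fin n → ℝ → ℝ := fun i => qt (μs i) with hgg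
  have hggmeas : ∀ i, Measurable (gg i) := fun i => qt_measurable (μs i)
  have hggmap : ∀ i, Measure.map (gg i) stdG = μs i := fun i => map_qt (μs i)
  set G : (Fin n → ℝ) → (Fin n → ℝ) := fun x i => gg i (x i) with hG
  have hGmeas : Measurable G := by
    rw [hG]
    exact measurable_pi_lambda _ fun i => (hggmeas i).comp (measurable_pi_apply i)
  set γn : Measure (Fin n → ℝ) := Measure.pi (fun _ : Fin n => stdG) with hγn
  -- the key sets
  set S : Set (Fin n → ℝ) := {x | ∃ τ ∈ F, Wfin τ x > tU} with hS
  have hSmeas : MeasurableSet S := by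
    have hrw : S = ⋃ τ ∈ F, {x | Wfin τ x > tU} := by
      ext x; simp [hS]
    rw [hrw]
    exact MeasurableSet.biUnion F.countable_toSet fun τ _ => hWmeasSet τ tU
  have hSfullmeas : ∀ t : ℝ,
      MeasurableSet {x : Fin n → ℝ | ∃ τ ∈ Finset.Icc h (n - h), Wfin τ x > t} := by
    intro t
    have hrw : {x : Fin n → ℝ | ∃ τ ∈ Finset.Icc h (n - h), Wfin τ x > t}
        = ⋃ τ ∈ Finset.Icc h (n - h), {x | Wfin τ x > t} := by
      ext x; simp
    rw [hrw]
    exact MeasurableSet.biUnion (Finset.Icc h (n - h)).countable_toSet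
      fun τ _ => hWmeasSet τ t
  -- joint laws
  have hjointZ : Measure.map (fun ω (i : Fin n) => Z (i.val + 1) ω) P = Measure.pi μs :=
    (joint_law P Z hZmeas hZindep).trans (congrArg Measure.pi (funext fun i => hlawZ i))
  have hjointξ : Measure.map (fun ω (i : Fin n) => ξ (i.val + 1) ω) P = γn := by
    rw [hγn]
    refine (joint_law P ξ hξmeas hξindep).trans (congrArg Measure.pi (funext fun i => ?_))
    have hi := i.isLt
    rw [hξlaw (i.val + 1) (Finset.mem_Icc.mpr (by omega))]
    rfl
  have hVZmeas : Measurable (fun ω (i : Fin n) => Z (i.val + 1) ω) :=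
    measurable_pi_lambda _ fun i => hZmeas _
  have hVξmeas : Measurable (fun ω (i : Fin n) => ξ (i.val + 1) ω) :=
    measurable_pi_lambda _ fun i => hξmeas _
  -- Null set off which G preserves the statistic, and a.e. invariance
  set Nset : Set (Fin n → ℝ) :=
    ⋃ (i : Fin n), ⋃ (j : Fin n), ⋃ (_ : i ≠ j), {x | gg i (x i) = gg j (x j)} with hNset
  have hNnull : γn Nset = 0 := by
    rw [hNset, hγn]
    refine measure_iUnion_null fun i => measure_iUnion_null fun j =>
      measure_iUnion_null fun hij => ?_
    exact pi_pair_fun_null stdG μs gg hggmeas hggmap hμsatomless hij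
  have hGS : γn (G ⁻¹' S) = γn S := by
    refine measure_congr ?_
    have hae : ∀ᵐ x ∂γn, x ∉ Nset := by
      rw [ae_iff]
      simpa [Classical.not_not] using hNnull
    filter_upwards [hae] with x hx
    have hWeq : ∀ τ ∈ F, Wfin τ (G x) = Wfin τ x := by
      intro τ hτ
      have hτIcc : τ ∈ Finset.Icc h (n - h) := by
        rw [hF] at hτ; exact (Finset.mem_filter.mp hτ).1
      rw [Finset.mem_Icc] at hτIcc
      rw [hWfin]
      refine Finset.sum_congr rfl fun i hi => Finset.sum_congr rfl fun j hj => ?_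
      have hii : i ∈ Finset.Ioc (τ - h) (τ + h) := by
        rw [Finset.mem_Ioc] at hi ⊢; omega
      rw [Finset.mem_Ioc] at hi hj
      have hGxj : G x (e j) = gg (e j) (x (e j)) := by rw [hG]
      have hGxi : G x (e i) = gg (e i) (x (e i)) := by rw [hG]
      by_cases hcase : e j = e i
      · rw [hGxj, hGxi, hcase, if_pos le_rfl, if_pos le_rfl]
      · have hei : ((e i : Fin n) : ℕ) + 1 = i := heval i (by omega) (by omega)
        have hej : ((e j : Fin n) : ℕ) + 1 = j := heval j (by omega) (by omega)
        have hsegeq : μs (e i) = μs (e j) := by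
          rw [hμs]
          simp only [hei, hej]
          rw [hsame τ hτ i j hii (Finset.mem_Ioc.mpr hj)]
        have hggeq : gg (e i) = gg (e j) := by
          rw [hgg]; simp only [hsegeq]
        have hmono : Monotone (gg (e j)) := by
          rw [hgg]; exact qt_mono (μs (e j))
        rw [hGxj, hGxi, hggeq]
        by_cases hle : x (e j) ≤ x (e i)
        · rw [if_pos hle, if_pos (hmono hle)]
        · have hlt : x (e i) < x (e j) := not_le.mp hle
          have hnotle : ¬ gg (e j) (x (e j)) ≤ gg (e j) (x (e i)) := by
            intro hcon
            apply hx
            rw [hNset]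
            refine Set.mem_iUnion.mpr ⟨e i, Set.mem_iUnion.mpr ⟨e j,
              Set.mem_iUnion.mpr ⟨fun hc => hcase hc.symm, ?_⟩⟩⟩
            have h1 : gg (e i) (x (e i)) = gg (e j) (x (e i)) := by rw [hggeq]
            have h2 : gg (e j) (x (e i)) ≤ gg (e j) (x (e j)) := hmono hlt.le
            exact Set.mem_setOf_eq ▸ (h1.trans (le_antisymm h2 hcon))
          rw [if_neg hle, if_neg hnotle]
    show (x ∈ G ⁻¹' S) = (x ∈ S)
    rw [eq_iff_iff]
    constructor
    · rintro ⟨τ, hτ, hgt⟩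
      exact ⟨τ, hτ, by rw [← hWeq τ hτ]; exact hgt⟩
    · rintro ⟨τ, hτ, hgt⟩
      exact ⟨τ, hτ, by rw [hWeq τ hτ]; exact hgt⟩
  -- threshold control for the simulated statistic
  have hthreshold :
      P {ω | ∃ τ ∈ Finset.Icc h (n - h), wmwStat h ξ τ ω > tU} ≤ ENNReal.ofReal α := by
    have hQanti : ∀ t t' : ℝ, t ≤ t' →
        P {ω | ∃ τ ∈ Finset.Icc h (n - h), wmwStat h ξ τ ω > t'}
          ≤ P {ω | ∃ τ ∈ Finset.Icc h (n - h), wmwStat h ξ τ ω > t} := by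
      intro t t' htt'
      refine measure_mono fun ω => ?_
      rintro ⟨τ, hτ, hgt⟩
      exact ⟨τ, hτ, lt_of_le_of_lt htt' hgt⟩
    set Sα : Set ℝ := {t : ℝ |
      P {ω | ∃ τ ∈ Finset.Icc h (n - h), wmwStat h ξ τ ω > t} ≤ ENNReal.ofReal α} with hSα
    have hSαne : Sα.Nonempty := by
      refine ⟨(h : ℝ) * (2 * h), ?_⟩
      show P {ω | ∃ τ ∈ Finset.Icc h (n - h),
          wmwStat h ξ τ ω > (h : ℝ) * (2 * h)} ≤ ENNReal.ofReal α
      have hempty : {ω | ∃ τ ∈ Finset.Icc h (n - h),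
          wmwStat h ξ τ ω > (h : ℝ) * (2 * h)} = ∅ := by
        ext ω
        simp only [Set.mem_setOf_eq, Set.mem_empty_iff_false, iff_false, not_exists]
        rintro τ ⟨hτ, hgt⟩
        rw [Finset.mem_Icc] at hτ
        have hbound : wmwStat h ξ τ ω ≤ (h : ℝ) * (2 * h) := by
          unfold wmwStat
          calc ∑ i ∈ Finset.Ioc τ (τ + h), ∑ j ∈ Finset.Ioc (τ - h) (τ + h),
                (if ξ j ω ≤ ξ i ω then (1 : ℝ) else 0)
              ≤ ∑ i ∈ Finset.Ioc τ (τ + h), ∑ j ∈ Finset.Ioc (τ - h) (τ + h), (1 : ℝ) := by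
                refine Finset.sum_le_sum fun i _ => Finset.sum_le_sum fun j _ => ?_
                split <;> norm_num
            _ = ((Finset.Ioc τ (τ + h)).card : ℝ) * ((Finset.Ioc (τ - h) (τ + h)).card : ℝ) := by
                simp [Finset.sum_const, mul_comm]
            _ = (h : ℝ) * (2 * h) := by
                rw [Nat.card_Ioc, Nat.card_Ioc]
                have h1 : τ + h - τ = h := by omega
                have h2 : τ + h - (τ - h) = 2 * h := by omega
                rw [h1, h2]
                push_cast
                ring
        exact absurd hgt (not_lt.mpr hbound)
      rw [hempty]
      simp
    have hSαbdd : BddBelow Sα := by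
      refine ⟨0, fun t ht => ?_⟩
      have ht' : P {ω | ∃ τ ∈ Finset.Icc h (n - h),
          wmwStat h ξ τ ω > t} ≤ ENNReal.ofReal α := ht
      by_contra hc
      push_neg at hc
      have huniv : {ω | ∃ τ ∈ Finset.Icc h (n - h), wmwStat h ξ τ ω > t} = Set.univ := by
        ext ω
        simp only [Set.mem_setOf_eq, Set.mem_univ, iff_true]
        refine ⟨h, Finset.mem_Icc.mpr ⟨le_rfl, by omega⟩, ?_⟩
        have hnonneg : 0 ≤ wmwStat h ξ h ω := by
          unfold wmwStat
          refine Finset.sum_nonneg fun i _ => Finset.sum_nonneg fun j _ => ?_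
          split <;> norm_num
        exact lt_of_lt_of_le hc hnonneg
      rw [huniv, measure_univ] at ht'
      exact absurd (lt_of_le_of_lt ht' (ENNReal.ofReal_lt_one.mpr hα1)) (lt_irrefl _)
    -- increasing union
    have hUnion : {ω | ∃ τ ∈ Finset.Icc h (n - h), wmwStat h ξ τ ω > tU}
        = ⋃ m : ℕ, {ω | ∃ τ ∈ Finset.Icc h (n - h),
            wmwStat h ξ τ ω > tU + 1 / (m + 1)} := by
      ext ω
      simp only [Set.mem_setOf_eq, Set.mem_iUnion]
      constructor
      · rintro ⟨τ, hτ, hgt⟩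
        obtain ⟨m, hm⟩ := exists_nat_one_div_lt (sub_pos.mpr hgt)
        exact ⟨m, τ, hτ, by linarith [hm]⟩
      · rintro ⟨m, τ, hτ, hgt⟩
        have hpos : (0 : ℝ) < 1 / (m + 1) := by positivity
        exact ⟨τ, hτ, by linarith⟩
    have hdir : Directed (· ⊆ ·) (fun m : ℕ => {ω | ∃ τ ∈ Finset.Icc h (n - h),
        wmwStat h ξ τ ω > tU + 1 / (m + 1)}) := by
      refine (Monotone.directed_le ?_)
      intro m m' hmm' ω
      rintro ⟨τ, hτ, hgt⟩
      refine ⟨τ, hτ, lt_of_le_of_lt (add_le_add_right ?_ tU) hgt⟩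
      gcongr
    calc P {ω | ∃ τ ∈ Finset.Icc h (n - h), wmwStat h ξ τ ω > tU}
        = ⨆ m : ℕ, P {ω | ∃ τ ∈ Finset.Icc h (n - h),
            wmwStat h ξ τ ω > tU + 1 / (m + 1)} := by
          rw [hUnion]
          exact Directed.measure_iUnion hdir
      _ ≤ ENNReal.ofReal α := by
          refine iSup_le fun m => ?_
          have hlt : sInf Sα < tU + 1 / (m + 1) := by
            rw [← htU]
            have : (0 : ℝ) < 1 / (m + 1) := by positivity
            linarith
          obtain ⟨t, htmem, htlt⟩ := exists_lt_of_csInf_lt hSαne hlt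
          have htmem' : P {ω | ∃ τ ∈ Finset.Icc h (n - h),
              wmwStat h ξ τ ω > t} ≤ ENNReal.ofReal α := htmem
          exact le_trans (hQanti t _ htlt.le) htmem'
  -- the main chain
  have hchain : P {ω | ∃ τ ∈ F, wmwStat h Z τ ω > tU} ≤ ENNReal.ofReal α := by
    have hFicc : ∀ τ ∈ F, τ ∈ Finset.Icc h (n - h) := by
      intro τ hτ; rw [hF] at hτ; exact (Finset.mem_filter.mp hτ).1
    have hsetZ : {ω | ∃ τ ∈ F, wmwStat h Z τ ω > tU}
        = (fun ω (i : Fin n) => Z (i.val + 1) ω) ⁻¹' S := by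
      ext ω
      rw [hS]
      simp only [Set.mem_setOf_eq, Set.mem_preimage]
      constructor
      · rintro ⟨τ, hτ, hgt⟩
        exact ⟨τ, hτ, by rw [← htrans Z τ (hFicc τ hτ) ω]; exact hgt⟩
      · rintro ⟨τ, hτ, hgt⟩
        exact ⟨τ, hτ, by rw [htrans Z τ (hFicc τ hτ) ω]; exact hgt⟩
    have hmapG : Measure.map G γn = Measure.pi μs := by
      rw [hγn, hG]
      exact pi_map_coord stdG μs gg hggmeas hggmap
    have hsetξ : {ω | ∃ τ ∈ Finset.Icc h (n - h), wmwStat h ξ τ ω > tU}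
        = (fun ω (i : Fin n) => ξ (i.val + 1) ω) ⁻¹'
          {x | ∃ τ ∈ Finset.Icc h (n - h), Wfin τ x > tU} := by
      ext ω
      simp only [Set.mem_setOf_eq, Set.mem_preimage]
      constructor
      · rintro ⟨τ, hτ, hgt⟩
        exact ⟨τ, hτ, by rw [← htrans ξ τ hτ ω]; exact hgt⟩
      · rintro ⟨τ, hτ, hgt⟩
        exact ⟨τ, hτ, by rw [htrans ξ τ hτ ω]; exact hgt⟩
    calc P {ω | ∃ τ ∈ F, wmwStat h Z τ ω > tU}
        = Measure.pi μs S := by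
          rw [hsetZ, ← Measure.map_apply hVZmeas hSmeas, hjointZ]
      _ = γn (G ⁻¹' S) := by rw [← hmapG, Measure.map_apply hGmeas hSmeas]
      _ = γn S := hGS
      _ ≤ γn {x | ∃ τ ∈ Finset.Icc h (n - h), Wfin τ x > tU} := by
          refine measure_mono ?_
          rintro x ⟨τ, hτ, hgt⟩
          exact ⟨τ, hFicc τ hτ, hgt⟩
      _ = P {ω | ∃ τ ∈ Finset.Icc h (n - h), wmwStat h ξ τ ω > tU} := by
          rw [hsetξ, ← hjointξ, Measure.map_apply hVξmeas (hSfullmeas tU)]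
      _ ≤ ENNReal.ofReal α := hthreshold
  refine le_trans (measure_mono ?_) hchain
  rintro ω ⟨τ, hτIcc, hnull, hT, hgt⟩
  refine ⟨τ, ?_, hgt⟩
  rw [hF, Finset.mem_filter]
  exact ⟨hτIcc, hnull⟩
end

section
/- Let (Ω,𝔉) be a measurable space equipped with two probability measures P and P₀, let n ≥ 2, and for each triple of integers 0 ≤ a < τ < b ≤ n let T_{τ,(a,b]} : Ω → ℝ be measurable. Let 0 = τ*₀ < τ*₁ < ⋯ < τ*_{K*} < τ*_{K*+1} = n be changepoints, and let H̃ = {(a,b] : 0 ≤ a < b ≤ n and the open interval (a,b) contains none of τ*₁,…,τ*_{K*}}. Let K̂ be a random nonnegative integer and 0 = τ̂₀ < τ̂₁ < ⋯ < τ̂_{K̂} < τ̂_{K̂+1} = n random integers, all jointly measurable. Let t ∈ ℝ, α ∈ (0,1), ε₁ ≥ 0, ε₂ ≥ 0, and assume: (i) P₀(max_{0≤a<τ<b≤n} T_{τ,(a,b]} > t) ≤ α + ε₁, and (ii) P(max_{0≤a<τ<b≤n, (a,b]∈H̃} T_{τ,(a,b]} > t) ≤ P₀(max_{0≤a<τ<b≤n,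 (a,b]∈H̃} T_{τ,(a,b]} > t) + ε₂. Then P(there exists j ∈ {1,…,K̂} with (τ̂_{j−1}, τ̂_{j+1}] ∈ H̃ and T_{τ̂_j,(τ̂_{j−1},τ̂_{j+1}]} > t) ≤ α + ε₁ + ε₂. -/
open MeasureTheory ProbabilityTheory Filter

/-- The segment `(a, b]` is a "true null" segment: `0 ≤ a < b ≤ n` and the open interval
`(a, b)` contains none of the true changepoints `τ*₁, …, τ*_{K*}`. -/
def NullSeg (n Kstar : ℕ) (τstar : ℕ → ℕ) (a b : ℕ) : Prop :=
  a < b ∧ b ≤ n ∧ ∀ k : ℕ, 1 ≤ k → k ≤ Kstar → ¬(a < τstar k ∧ τstar k < b)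

/-- **FWER control for true nulls defined by neighboring detected changepoints
(non-asymptotic form of Proposition 3).**
Scanning statistics `T τ a b` (for `0 ≤ a < τ < b ≤ n`) are thresholded at `t`; the
detected changepoints are `τ̂₁ < ⋯ < τ̂_{K̂}` (with `τ̂₀ = 0`, `τ̂_{K̂+1} = n`), all jointly
measurable.  Under the threshold-selection condition (i) and the nullifiability
condition (ii), the probability that some detected `τ̂_j` whose flanking segment
`(τ̂_{j−1}, τ̂_{j+1}]` is a true null is declared significant is at most `α + ε₁ + ε₂`. -/
theorem stmt8
    {Ω : Type*} [MeasurableSpace Ω] (P P₀ : Measure Ω)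
    [IsProbabilityMeasure P] [IsProbabilityMeasure P₀]
    (n : ℕ) (hn : 2 ≤ n)
    (T : ℕ → ℕ → ℕ → Ω → ℝ)  -- `T τ a b` is the statistic for split `τ` of the segment `(a,b]`
    (hTmeas : ∀ a τ b : ℕ, a < τ → τ < b → b ≤ n → Measurable (T τ a b))
    (Kstar : ℕ) (τstar : ℕ → ℕ)
    (hτ0 : τstar 0 = 0) (hτlast : τstar (Kstar + 1) = n)
    (hτmono : ∀ k ≤ Kstar, τstar k < τstar (k + 1))
    (Khat : Ω → ℕ) (τhat : Ω → ℕ → ℕ)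
    (hKmeas : Measurable Khat) (hτhatmeas : ∀ j : ℕ, Measurable fun ω => τhat ω j)
    (hτhat0 : ∀ ω, τhat ω 0 = 0)
    (hτhatlast : ∀ ω, τhat ω (Khat ω + 1) = n)
    (hτhatmono : ∀ ω, ∀ j ≤ Khat ω, τhat ω j < τhat ω (j + 1))
    (t α ε₁ ε₂ : ℝ) (hα0 : 0 < α) (hα1 : α < 1) (hε₁ : 0 ≤ ε₁) (hε₂ : 0 ≤ ε₂)
    -- (i) threshold selection under the global-null measure P₀
    (hthresh : P₀ {ω | ∃ a τ b : ℕ, a < τ ∧ τ < b ∧ b ≤ n ∧ T τ a b ω > t}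
      ≤ ENNReal.ofReal (α + ε₁))
    -- (ii) nullifiability
    (hnull :
      P {ω | ∃ a τ b : ℕ, a < τ ∧ τ < b ∧ NullSeg n Kstar τstar a b ∧ T τ a b ω > t}
      ≤ P₀ {ω | ∃ a τ b : ℕ, a < τ ∧ τ < b ∧ NullSeg n Kstar τstar a b ∧ T τ a b ω > t}
        + ENNReal.ofReal ε₂) :
    P {ω | ∃ j : ℕ, 1 ≤ j ∧ j ≤ Khat ω ∧
        NullSeg n Kstar τstar (τhat ω (j - 1)) (τhat ω (j + 1)) ∧
        T (τhat ω j) (τhat ω (j - 1)) (τhat ω (j + 1)) ω > t}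
      ≤ ENNReal.ofReal (α + ε₁ + ε₂) := by
  calc P {ω | ∃ j : ℕ, 1 ≤ j ∧ j ≤ Khat ω ∧
        NullSeg n Kstar τstar (τhat ω (j - 1)) (τhat ω (j + 1)) ∧
        T (τhat ω j) (τhat ω (j - 1)) (τhat ω (j + 1)) ω > t}
      ≤ P {ω | ∃ a τ b : ℕ, a < τ ∧ τ < b ∧ NullSeg n Kstar τstar a b ∧ T τ a b ω > t} := by
        apply measure_mono
        rintro ω ⟨j, hj1, hjK, hns, hT⟩
        refine ⟨τhat ω (j - 1), τhat ω j, τhat ω (j + 1), ?_, ?_, hns, hT⟩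
        · have := hτhatmono ω (j - 1) (le_trans (Nat.sub_le j 1) hjK)
          rwa [Nat.sub_add_cancel hj1] at this
        · exact hτhatmono ω j hjK
    _ ≤ P₀ {ω | ∃ a τ b : ℕ, a < τ ∧ τ < b ∧ NullSeg n Kstar τstar a b ∧ T τ a b ω > t}
        + ENNReal.ofReal ε₂ := hnull
    _ ≤ P₀ {ω | ∃ a τ b : ℕ, a < τ ∧ τ < b ∧ b ≤ n ∧ T τ a b ω > t} + ENNReal.ofReal ε₂ := by
        gcongr
        intro hns
        exact hns.2.1
    _ ≤ ENNReal.ofReal (α + ε₁) + ENNReal.ofReal ε₂ := by gcongr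
    _ = ENNReal.ofReal (α + ε₁ + ε₂) := (ENNReal.ofReal_add (by linarith) hε₂).symm
end

section
/- Let X₁,…,X_m be iid real random variables with an atomless distribution, and let Y₁,…,Y_m be iid real random variables with a (possibly different) atomless distribution. For a window size h with 2h ≤ m and h ≤ τ ≤ m−h, define T_τ(X) = Σ_{i=τ+1}^{τ+h} Σ_{j=τ−h+1}^{τ+h} 1{X_j ≤ X_i}, and define T_τ(Y) analogously from Y₁,…,Y_m. Then the random vectors (T_τ(X))_{h≤τ≤m−h} and (T_τ(Y))_{h≤τ≤m−h} have the same joint distribution. -/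
open MeasureTheory ProbabilityTheory Filter
open scoped ENNReal

namespace TuneAux

variable {m h : ℕ}

/-- Extend a vector indexed by `Fin m` to `ℕ` with 1-based indexing. -/
noncomputable def extVec (m : ℕ) (x : Fin m → ℝ) (k : ℕ) : ℝ :=
  if hk : k - 1 < m then x ⟨k - 1, hk⟩ else 0

lemma measurable_extVec (k : ℕ) : Measurable fun x : Fin m → ℝ => extVec m x k := by
  by_cases hk : k - 1 < m
  · simpa [extVec, hk] using measurable_pi_apply (⟨k - 1, hk⟩ : Fin m)
  · simp only [extVec, hk, dif_neg, not_false_iff]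
    exact measurable_const

lemma extVec_apply {k : ℕ} (hk1 : 1 ≤ k) (hkm : k ≤ m) (x : Fin m → ℝ) :
    extVec m x k = x ⟨k - 1, by omega⟩ := dif_pos (by omega)

/-- The windowed Wilcoxon statistics as a function of the sample vector. -/
noncomputable def wilG (m h : ℕ) (x : Fin m → ℝ) (τ : Finset.Icc h (m - h)) : ℝ :=
  ∑ i ∈ Finset.Ioc (τ : ℕ) ((τ : ℕ) + h), ∑ j ∈ Finset.Ioc ((τ : ℕ) - h) ((τ : ℕ) + h),
    (if extVec m x j ≤ extVec m x i then (1 : ℝ) else 0)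

lemma measurable_wilG : Measurable (wilG m h) := by
  apply measurable_pi_lambda
  intro τ
  apply Finset.measurable_sum
  intro i _
  apply Finset.measurable_sum
  intro j _
  exact Measurable.ite
    (measurableSet_le (measurable_extVec j) (measurable_extVec i))
    measurable_const measurable_const

lemma range_index (hh : 1 ≤ h) (hm : 2 * h ≤ m) {τ k : ℕ}
    (hτ : h ≤ τ ∧ τ ≤ m - h) (hk : τ - h < k ∧ k ≤ τ + h) : 1 ≤ k ∧ k ≤ m := by
  omega

lemma wilG_congr (hh : 1 ≤ h) (hm : 2 * h ≤ m) {x y : Fin m → ℝ}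
    (hxy : ∀ a b : Fin m, (x a ≤ x b ↔ y a ≤ y b)) :
    wilG m h x = wilG m h y := by
  funext τ
  have hτ := Finset.mem_Icc.mp τ.2
  unfold wilG
  refine Finset.sum_congr rfl fun i hi => Finset.sum_congr rfl fun j hj => ?_
  rw [Finset.mem_Ioc] at hi hj
  have hi' : 1 ≤ i ∧ i ≤ m := range_index hh hm hτ ⟨by omega, hi.2⟩
  have hj' : 1 ≤ j ∧ j ≤ m := range_index hh hm hτ hj
  rw [extVec_apply hj'.1 hj'.2, extVec_apply hi'.1 hi'.2,
      extVec_apply hj'.1 hj'.2, extVec_apply hi'.1 hi'.2]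
  exact if_congr (hxy _ _) rfl rfl

/-- Sorting region for a permutation. -/
def sortedSet (m : ℕ) (σ : Equiv.Perm (Fin m)) : Set (Fin m → ℝ) :=
  {x | StrictMono (x ∘ σ)}

lemma measurableSet_sortedSet (σ : Equiv.Perm (Fin m)) :
    MeasurableSet (sortedSet m σ) := by
  have : sortedSet m σ
      = ⋂ (a : Fin m) (b : Fin m) (_ : a < b), {x : Fin m → ℝ | x (σ a) < x (σ b)} := by
    ext x
    simp only [sortedSet, Set.mem_setOf_eq, Set.mem_iInter, StrictMono, Function.comp]
  rw [this]
  exact MeasurableSet.iInter fun a => MeasurableSet.iInter fun b => MeasurableSet.iInter fun _ =>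
    measurableSet_lt (measurable_pi_apply _) (measurable_pi_apply _)

lemma sortedSet_inter {σ π : Equiv.Perm (Fin m)} (hne : σ ≠ π) :
    sortedSet m σ ∩ sortedSet m π = ∅ := by
  ext x
  simp only [Set.mem_inter_iff, Set.mem_empty_iff_false, iff_false, not_and]
  intro h1' h2'
  have h1 : StrictMono (x ∘ ⇑σ) := h1'
  have h2 : StrictMono (x ∘ ⇑π) := h2'
  have hr : Set.range (x ∘ σ) = Set.range (x ∘ π) := by
    rw [Set.range_comp, Set.range_comp, Equiv.range_eq_univ, Equiv.range_eq_univ]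
  haveI : WellFoundedLT (Fin m) := inferInstance
  have heq : x ∘ ⇑σ = x ∘ ⇑π := (StrictMono.range_inj h1 h2).1 hr
  have hinj : Function.Injective x := by
    intro a b hab
    have := h1.injective (a₁ := σ.symm a) (a₂ := σ.symm b)
      (by simpa [Function.comp] using hab)
    simpa using congrArg σ this
  exact hne (Equiv.ext fun i => hinj (congrFun heq i))

variable (μ : Measure ℝ) [IsProbabilityMeasure μ]

lemma map_comp_perm (σ : Equiv.Perm (Fin m)) :
    Measure.map (fun x : Fin m → ℝ => x ∘ σ) (Measure.pi fun _ => μ)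
      = Measure.pi fun _ => μ := by
  have hmeas : Measurable fun x : Fin m → ℝ => x ∘ σ :=
    measurable_pi_lambda _ fun b => measurable_pi_apply _
  refine (Measure.pi_eq fun s hs => ?_).symm
  rw [Measure.map_apply hmeas (MeasurableSet.univ_pi hs)]
  have hset : (fun x : Fin m → ℝ => x ∘ σ) ⁻¹' Set.pi Set.univ s
      = Set.pi Set.univ fun i => s (σ.symm i) := by
    ext x
    simp only [Set.mem_preimage, Set.mem_univ_pi, Function.comp]
    constructor
    · intro H i; simpa using H (σ.symm i)
    · intro H b; simpa using H (σ b)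
  rw [hset, Measure.pi_pi]
  exact (Equiv.prod_comp σ.symm fun i => μ (s i))

lemma sortedSet_measure_eq (σ : Equiv.Perm (Fin m)) :
    (Measure.pi fun _ : Fin m => μ) (sortedSet m σ)
      = (Measure.pi fun _ : Fin m => μ) (sortedSet m 1) := by
  have hmeas : Measurable fun x : Fin m → ℝ => x ∘ σ :=
    measurable_pi_lambda _ fun b => measurable_pi_apply _
  have hset : sortedSet m σ = (fun x : Fin m → ℝ => x ∘ σ) ⁻¹' sortedSet m 1 := by
    ext x
    simp [sortedSet]
  rw [hset, ← Measure.map_apply hmeas (measurableSet_sortedSet 1), map_comp_perm]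

lemma pair_eq_null (hA : ∀ x : ℝ, μ {x} = 0) {i j : Fin m} (hij : i ≠ j) :
    (Measure.pi fun _ : Fin m => μ) {x | x i = x j} = 0 := by
  classical
  set T : (Fin m → ℝ) → ℝ × ℝ := fun x => (x i, x j) with hT
  have hTmeas : Measurable T := (measurable_pi_apply i).prodMk (measurable_pi_apply j)
  have hmap : Measure.map T (Measure.pi fun _ : Fin m => μ) = μ.prod μ := by
    refine (Measure.prod_eq fun s t hs ht => ?_).symm
    rw [Measure.map_apply hTmeas (hs.prod ht)]
    have hset : T ⁻¹' (s ×ˢ t)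
        = Set.pi Set.univ (fun k => if k = i then s else if k = j then t else Set.univ) := by
      ext x
      simp only [hT, Set.mem_preimage, Set.mem_prod, Set.mem_univ_pi]
      constructor
      · rintro ⟨h1, h2⟩ k
        by_cases hki : k = i
        · subst hki; simp [h1]
        · by_cases hkj : k = j
          · subst hkj; simp [hki, h2]
          · simp [hki, hkj]
      · intro H
        refine ⟨?_, ?_⟩
        · have := H i; simpa using this
        · have := H j; simpa [hij.symm] using this
    rw [hset, Measure.pi_pi]
    rw [← Finset.prod_subset (Finset.subset_univ ({i, j} : Finset (Fin m)))
        (fun k _ hk => ?_)]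
    · rw [Finset.prod_pair hij]
      simp [hij.symm]
    · simp only [Finset.mem_insert, Finset.mem_singleton, not_or] at hk
      simp [hk.1, hk.2]
  have hdiag : MeasurableSet {p : ℝ × ℝ | p.1 = p.2} :=
    measurableSet_eq_fun measurable_fst measurable_snd
  have hpre : {x : Fin m → ℝ | x i = x j} = T ⁻¹' {p : ℝ × ℝ | p.1 = p.2} := rfl
  rw [hpre, ← Measure.map_apply hTmeas hdiag, hmap, Measure.prod_apply hdiag]
  have : ∀ a : ℝ, μ (Prod.mk a ⁻¹' {p : ℝ × ℝ | p.1 = p.2}) = 0 := by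
    intro a
    have : Prod.mk a ⁻¹' {p : ℝ × ℝ | p.1 = p.2} = {a} := by
      ext b; simp [eq_comm]
    rw [this]; exact hA a
  rw [lintegral_congr this, lintegral_zero]

lemma noninj_null (hA : ∀ x : ℝ, μ {x} = 0) :
    (Measure.pi fun _ : Fin m => μ) {x : Fin m → ℝ | ¬ Function.Injective x} = 0 := by
  have hsub : {x : Fin m → ℝ | ¬ Function.Injective x}
      ⊆ ⋃ (p : Fin m × Fin m) (_ : p.1 ≠ p.2), {x : Fin m → ℝ | x p.1 = x p.2} := by
    intro x hx
    simp only [Set.mem_setOf_eq, Function.Injective, not_forall] at hx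
    obtain ⟨a, b, hab, hne⟩ := hx
    exact Set.mem_iUnion.mpr ⟨(a, b), Set.mem_iUnion.mpr ⟨hne, hab⟩⟩
  refine measure_mono_null hsub ?_
  refine measure_iUnion_null fun p => measure_iUnion_null fun hp => pair_eq_null μ hA hp

lemma compl_sorted_null (hA : ∀ x : ℝ, μ {x} = 0) :
    (Measure.pi fun _ : Fin m => μ) (⋃ σ : Equiv.Perm (Fin m), sortedSet m σ)ᶜ = 0 := by
  refine measure_mono_null (fun x hx => ?_) (noninj_null μ hA)
  simp only [Set.mem_compl_iff, Set.mem_iUnion, not_exists] at hx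
  simp only [Set.mem_setOf_eq]
  intro hinj
  refine hx (Tuple.sort x) ?_
  exact (Tuple.monotone_sort x).strictMono_of_injective (hinj.comp (Equiv.injective _))

/-- Canonical representative value of the Wilcoxon vector on the sorting region of `σ`. -/
noncomputable def wilVal (m h : ℕ) (σ : Equiv.Perm (Fin m)) : Finset.Icc h (m - h) → ℝ :=
  wilG m h fun i => ((σ.symm i : ℕ) : ℝ)

lemma wilG_eq_on_sortedSet (hh : 1 ≤ h) (hm : 2 * h ≤ m) {σ : Equiv.Perm (Fin m)}
    {x : Fin m → ℝ} (hx : x ∈ sortedSet m σ) : wilG m h x = wilVal m h σ := by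
  have hx' : StrictMono (x ∘ ⇑σ) := hx
  refine wilG_congr hh hm fun a b => ?_
  have h1 : x a ≤ x b ↔ σ.symm a ≤ σ.symm b := by
    have := hx'.le_iff_le (a := σ.symm a) (b := σ.symm b)
    simpa using this
  have h2 : ((σ.symm a : ℕ) : ℝ) ≤ ((σ.symm b : ℕ) : ℝ) ↔ σ.symm a ≤ σ.symm b := by
    rw [Nat.cast_le]
    exact (Fin.le_def).symm
  rw [h1, ← h2]

lemma sortedSet_measure_val (hA : ∀ x : ℝ, μ {x} = 0) (σ : Equiv.Perm (Fin m)) :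
    (Measure.pi fun _ : Fin m => μ) (sortedSet m σ) = ((m.factorial : ℝ≥0∞))⁻¹ := by
  set π := (Measure.pi fun _ : Fin m => μ) with hπ
  have hdisj : Pairwise (Function.onFun Disjoint (sortedSet m)) := fun a b hab =>
    Set.disjoint_iff_inter_eq_empty.mpr (sortedSet_inter hab)
  have hfull : π (⋃ τ : Equiv.Perm (Fin m), sortedSet m τ) = 1 := by
    have := measure_inter_conull (μ := π) (s := Set.univ) (compl_sorted_null μ hA)
    rw [Set.univ_inter] at this
    rw [this]
    exact measure_univ
  have hsum : ∑ τ : Equiv.Perm (Fin m), π (sortedSet m τ) = 1 := by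
    rw [← hfull, measure_iUnion hdisj measurableSet_sortedSet, tsum_fintype]
  have hconst : ∀ τ : Equiv.Perm (Fin m), π (sortedSet m τ) = π (sortedSet m 1) :=
    fun τ => sortedSet_measure_eq μ τ
  have hcard : ((m.factorial : ℝ≥0∞)) * π (sortedSet m 1) = 1 := by
    calc (m.factorial : ℝ≥0∞) * π (sortedSet m 1)
        = (Fintype.card (Equiv.Perm (Fin m)) : ℝ≥0∞) * π (sortedSet m 1) := by
          rw [Fintype.card_perm, Fintype.card_fin]
      _ = ∑ _τ : Equiv.Perm (Fin m), π (sortedSet m 1) := by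
          rw [Finset.sum_const, Finset.card_univ, nsmul_eq_mul]
      _ = ∑ τ : Equiv.Perm (Fin m), π (sortedSet m τ) :=
          (Finset.sum_congr rfl fun τ _ => (hconst τ).symm)
      _ = 1 := hsum
  rw [hconst σ]
  exact ENNReal.eq_inv_of_mul_eq_one_left (by rw [mul_comm] at hcard; exact hcard)

lemma map_wilG_pi (hh : 1 ≤ h) (hm : 2 * h ≤ m) (hA : ∀ x : ℝ, μ {x} = 0) :
    Measure.map (wilG m h) (Measure.pi fun _ : Fin m => μ)
      = (m.factorial : ℝ≥0∞)⁻¹ •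
          ∑ σ : Equiv.Perm (Fin m), Measure.dirac (wilVal m h σ) := by
  classical
  set π := (Measure.pi fun _ : Fin m => μ) with hπ
  refine Measure.ext fun s hs => ?_
  rw [Measure.map_apply measurable_wilG hs]
  have hdisj : Pairwise (Function.onFun Disjoint
      (fun σ : Equiv.Perm (Fin m) => wilG m h ⁻¹' s ∩ sortedSet m σ)) := fun a b hab => by
    refine Set.disjoint_iff_inter_eq_empty.mpr ?_
    show (wilG m h ⁻¹' s ∩ sortedSet m a) ∩ (wilG m h ⁻¹' s ∩ sortedSet m b) = ∅
    refine Set.eq_empty_iff_forall_notMem.mpr fun x hx => ?_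
    have hx' : x ∈ sortedSet m a ∩ sortedSet m b := ⟨hx.1.2, hx.2.2⟩
    rw [sortedSet_inter (m := m) hab] at hx'
    exact hx'
  have hsplit : π (wilG m h ⁻¹' s)
      = ∑ σ : Equiv.Perm (Fin m), π (wilG m h ⁻¹' s ∩ sortedSet m σ) := by
    rw [← measure_inter_conull (μ := π) (s := wilG m h ⁻¹' s) (compl_sorted_null μ hA),
      Set.inter_iUnion, measure_iUnion hdisj
        (fun σ => (measurable_wilG hs).inter (measurableSet_sortedSet σ)),
      tsum_fintype]
  rw [hsplit]
  rw [Measure.smul_apply, Measure.finset_sum_apply, smul_eq_mul, Finset.mul_sum]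
  refine Finset.sum_congr rfl fun σ _ => ?_
  rw [Measure.dirac_apply' _ hs]
  by_cases hσ : wilVal m h σ ∈ s
  · have hset : wilG m h ⁻¹' s ∩ sortedSet m σ = sortedSet m σ := by
      refine Set.inter_eq_right.mpr fun x hx => ?_
      simp only [Set.mem_preimage]
      rw [wilG_eq_on_sortedSet hh hm hx]
      exact hσ
    rw [hset, sortedSet_measure_val μ hA σ, Set.indicator_of_mem hσ]
    simp
  · have hset : wilG m h ⁻¹' s ∩ sortedSet m σ = ∅ := by
      ext x
      simp only [Set.mem_inter_iff, Set.mem_preimage, Set.mem_empty_iff_false, iff_false, not_and]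
      intro hxs hxσ
      rw [wilG_eq_on_sortedSet hh hm hxσ] at hxs
      exact hσ hxs
    rw [hset, Set.indicator_of_notMem hσ]
    simp

lemma map_vec_eq_pi {Ω : Type*} [MeasurableSpace Ω] (P : Measure Ω) [IsProbabilityMeasure P]
    (X : ℕ → Ω → ℝ) (hXmeas : ∀ i, Measurable (X i))
    (hindep : iIndepFun (fun i : Fin m => X (i.val + 1)) P)
    (hlaw : ∀ i : Fin m, Measure.map (X (i.val + 1)) P = μ) :
    Measure.map (fun ω (i : Fin m) => X (i.val + 1) ω) P = Measure.pi fun _ => μ := by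
  have hmeas : Measurable (fun ω (i : Fin m) => X (i.val + 1) ω) :=
    measurable_pi_lambda _ fun i => hXmeas _
  refine (Measure.pi_eq fun s hs => ?_).symm
  rw [Measure.map_apply hmeas (MeasurableSet.univ_pi hs)]
  have hset : (fun ω (i : Fin m) => X (i.val + 1) ω) ⁻¹' Set.pi Set.univ s
      = ⋂ i ∈ Finset.univ, (X (i.val + 1)) ⁻¹' s i := by
    ext ω
    simp [Set.mem_univ_pi]
  rw [hset, hindep.measure_inter_preimage_eq_mul Finset.univ (fun i _ => hs i)]
  exact Finset.prod_congr rfl fun i _ => by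
    rw [← Measure.map_apply (hXmeas _) (hs i), hlaw i]

end TuneAux

/-- The windowed two-sample Wilcoxon/Mann–Whitney statistic for the window `(τ−h, τ+h]`
split at `τ`, computed from the sequence `X` at sample point `ω`:
`T_τ = Σ_{i=τ+1}^{τ+h} Σ_{j=τ−h+1}^{τ+h} 1{X_j ≤ X_i}`. -/
noncomputable def wilcoxonStat {Ω : Type*} (h : ℕ) (X : ℕ → Ω → ℝ) (τ : ℕ) (ω : Ω) : ℝ :=
  ∑ i ∈ Finset.Ioc τ (τ + h), ∑ j ∈ Finset.Ioc (τ - h) (τ + h),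
    (if X j ω ≤ X i ω then (1 : ℝ) else 0)


open TuneAux in
/-- The composed form of the windowed Wilcoxon statistics. -/
lemma wilcoxon_comp_eq {Ω : Type*} {m h : ℕ} (hh : 1 ≤ h) (hm : 2 * h ≤ m) (X : ℕ → Ω → ℝ) :
    (fun ω (τ : Finset.Icc h (m - h)) => wilcoxonStat h X (τ : ℕ) ω)
      = TuneAux.wilG m h ∘ (fun ω (i : Fin m) => X (i.val + 1) ω) := by
  funext ω
  funext τ
  have hτ := Finset.mem_Icc.mp τ.2
  simp only [Function.comp_apply]
  unfold wilcoxonStat TuneAux.wilG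
  refine Finset.sum_congr rfl fun i hi => Finset.sum_congr rfl fun j hj => ?_
  rw [Finset.mem_Ioc] at hi hj
  have hi' : 1 ≤ i ∧ i ≤ m := TuneAux.range_index hh hm hτ ⟨by omega, hi.2⟩
  have hj' : 1 ≤ j ∧ j ≤ m := TuneAux.range_index hh hm hτ hj
  rw [TuneAux.extVec_apply hj'.1 hj'.2, TuneAux.extVec_apply hi'.1 hi'.2]
  show (if X j ω ≤ X i ω then (1 : ℝ) else 0)
      = if X ((j - 1) + 1) ω ≤ X ((i - 1) + 1) ω then (1 : ℝ) else 0
  rw [Nat.sub_add_cancel hj'.1, Nat.sub_add_cancel hi'.1]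

/-- **Distribution-freeness of the windowed Wilcoxon statistics.**
If `X₁,…,X_m` are iid with an atomless distribution and `Y₁,…,Y_m` are iid with a
(possibly different) atomless distribution, then the random vectors
`(T_τ(X))_{h≤τ≤m−h}` and `(T_τ(Y))_{h≤τ≤m−h}` have the same joint distribution. -/
theorem stmt12
    {Ω₁ Ω₂ : Type*} [MeasurableSpace Ω₁] [MeasurableSpace Ω₂]
    (P₁ : Measure Ω₁) (P₂ : Measure Ω₂)
    [IsProbabilityMeasure P₁] [IsProbabilityMeasure P₂]
    (m h : ℕ) (hh : 1 ≤ h) (hm : 2 * h ≤ m)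
    (X : ℕ → Ω₁ → ℝ) (Y : ℕ → Ω₂ → ℝ)
    (hXmeas : ∀ i, Measurable (X i)) (hYmeas : ∀ i, Measurable (Y i))
    (μX μY : Measure ℝ) [IsProbabilityMeasure μX] [IsProbabilityMeasure μY]
    (hXindep : iIndepFun (fun i : Fin m => X (i.val + 1)) P₁)
    (hYindep : iIndepFun (fun i : Fin m => Y (i.val + 1)) P₂)
    (hXlaw : ∀ i ∈ Finset.Icc 1 m, Measure.map (X i) P₁ = μX)
    (hYlaw : ∀ i ∈ Finset.Icc 1 m, Measure.map (Y i) P₂ = μY)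
    (hXatomless : ∀ x : ℝ, μX {x} = 0)
    (hYatomless : ∀ y : ℝ, μY {y} = 0) :
    Measure.map
        (fun ω (τ : Finset.Icc h (m - h)) => wilcoxonStat h X (τ : ℕ) ω) P₁
      = Measure.map
        (fun ω (τ : Finset.Icc h (m - h)) => wilcoxonStat h Y (τ : ℕ) ω) P₂ := by
  have hXlaw' : ∀ i : Fin m, Measure.map (X (i.val + 1)) P₁ = μX := fun i =>
    hXlaw _ (Finset.mem_Icc.mpr ⟨by omega, by have := i.isLt; omega⟩)
  have hYlaw' : ∀ i : Fin m, Measure.map (Y (i.val + 1)) P₂ = μY := fun i =>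
    hYlaw _ (Finset.mem_Icc.mpr ⟨by omega, by have := i.isLt; omega⟩)
  have hvX := TuneAux.map_vec_eq_pi (m := m) μX P₁ X hXmeas hXindep hXlaw'
  have hvY := TuneAux.map_vec_eq_pi (m := m) μY P₂ Y hYmeas hYindep hYlaw'
  have hmeasvecX : Measurable (fun ω (i : Fin m) => X (i.val + 1) ω) :=
    measurable_pi_lambda _ fun i => hXmeas _
  have hmeasvecY : Measurable (fun ω (i : Fin m) => Y (i.val + 1) ω) :=
    measurable_pi_lambda _ fun i => hYmeas _
  rw [wilcoxon_comp_eq hh hm X, wilcoxon_comp_eq hh hm Y,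
    ← Measure.map_map TuneAux.measurable_wilG hmeasvecX,
    ← Measure.map_map TuneAux.measurable_wilG hmeasvecY,
    hvX, hvY, TuneAux.map_wilG_pi μX hh hm hXatomless,
    TuneAux.map_wilG_pi μY hh hm hYatomless]
end
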